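/- Let V be a real vector space, c ∈ ℝ, n ≥ 1, q : V × V → ℝ a symmetric bilinear form, and T : V^{2n} → ℝ a symmetric 2n-multilinear form such that T(α, α, …, α) = c · q(α,α)^n for all α ∈ V. Then for every L ∈ V with q(L,L) = 0 and every β ∈ V, the evaluation of T on n+1 copies of L and n−1 copies of β is zero. -/

import Mathlib

/-- abstract Fujiki relation: if a symmetric 2n-multilinear form
T satisfies T(α,…,α) = c·q(α,α)ⁿ, then T evaluated on n+1 copies of an
isotropic vector L and n−1 copies of any β vanishes. -/
theorem stmt_12 {V : Type*} [AddCommGroup V] [Module ℝ V]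
    (c : ℝ) (n : ℕ) (hn : 1 ≤ n)
    (q : V →ₗ[ℝ] V →ₗ[ℝ] ℝ) (hq : ∀ x y : V, q x y = q y x)
    (T : MultilinearMap ℝ (fun _ : Fin (2 * n) => V) ℝ)
    (hTsymm : ∀ (v : Fin (2 * n) → V) (σ : Equiv.Perm (Fin (2 * n))),
      T (v ∘ σ) = T v)
    (hfujiki : ∀ α : V, T (fun _ => α) = c * (q α α) ^ n)
    (L : V) (hL : q L L = 0) (β : V) :
    T (fun i => if (i : ℕ) < n + 1 then L else β) = 0 := by
  classical
  -- card of initial segments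
  have hflt : ∀ k : ℕ, k ≤ 2 * n →
      (Finset.univ.filter (fun i : Fin (2 * n) => (i : ℕ) < k)).card = k := by
    intro k hk
    have : (Finset.univ.filter (fun i : Fin (2 * n) => (i : ℕ) < k)) =
        Finset.univ.map (Fin.castLEEmb hk) := by
      ext i
      rw [Finset.mem_filter, Finset.mem_map]
      constructor
      · intro h
        exact ⟨⟨(i : ℕ), h.2⟩, Finset.mem_univ _, Fin.ext rfl⟩
      · rintro ⟨j, -, rfl⟩
        exact ⟨Finset.mem_univ _, by simpa using j.isLt⟩
    rw [this, Finset.card_map, Finset.card_univ, Fintype.card_fin]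
  set a : ℕ → ℝ := fun k => T (fun i => if (i : ℕ) < k then β else L) with ha
  -- symmetry: value depends only on the number of β's
  have hsym : ∀ s : Finset (Fin (2 * n)),
      T (fun i => if i ∈ s then β else L) = a s.card := by
    intro s
    have hsle : s.card ≤ 2 * n := by
      simpa using Finset.card_le_univ s
    set t : Finset (Fin (2 * n)) := Finset.univ.filter (fun i => (i : ℕ) < s.card) with ht
    have htcard : t.card = s.card := hflt _ hsle
    have hccard : (sᶜ : Finset (Fin (2 * n))).card = (tᶜ : Finset (Fin (2 * n))).card := by
      simp [Finset.card_compl, htcard]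
    let e : {x : Fin (2 * n) // x ∈ s} ≃ {x : Fin (2 * n) // x ∈ t} :=
      s.equivOfCardEq htcard.symm
    let e' : {x : Fin (2 * n) // ¬ x ∈ s} ≃ {x : Fin (2 * n) // ¬ x ∈ t} :=
      ((Equiv.subtypeEquivRight (fun x => by simp)).trans
        ((sᶜ).equivOfCardEq hccard)).trans
        (Equiv.subtypeEquivRight (fun x => by simp))
    let σ : Equiv.Perm (Fin (2 * n)) :=
      ((Equiv.sumCompl (· ∈ s)).symm.trans ((Equiv.sumCongr e e').trans
        (Equiv.sumCompl (· ∈ t))))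
    have hmem : ∀ i, σ i ∈ t ↔ i ∈ s := by
      intro i
      by_cases h : i ∈ s
      · simp only [σ, Equiv.trans_apply, Equiv.sumCompl_symm_apply_of_pos (p := (· ∈ s)) h,
          Equiv.sumCongr_apply, Sum.map_inl, Equiv.sumCompl_apply_inl]
        simpa [h] using (e ⟨i, h⟩).2
      · simp only [σ, Equiv.trans_apply, Equiv.sumCompl_symm_apply_of_neg (p := (· ∈ s)) h,
          Equiv.sumCongr_apply, Sum.map_inr, Equiv.sumCompl_apply_inr]
        simpa [h] using (e' ⟨i, h⟩).2
    have hv : (fun i => if i ∈ t then β else L) ∘ σ = fun i => if i ∈ s then β else L := by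
      funext i
      simp only [Function.comp_apply, hmem i]
    have h4 := hTsymm (fun i => if i ∈ t then β else L) σ
    rw [hv] at h4
    rw [h4]
    simp only [ha, ht]
    congr 1
    funext i
    simp [Finset.mem_filter]
  -- multilinear expansion
  have key : ∀ x : ℝ, T (fun _ => L + x • β) =
      ∑ s : Finset (Fin (2 * n)), x ^ s.card * a s.card := by
    intro x
    have h1 : (fun _ : Fin (2 * n) => L + x • β) =
        (fun _ : Fin (2 * n) => x • β) + (fun _ : Fin (2 * n) => L) := by
      funext i; simp [add_comm]
    rw [h1, T.map_add_univ]
    refine Finset.sum_congr rfl fun s _ => ?_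
    have h2 : s.piecewise (fun _ : Fin (2 * n) => x • β) (fun _ => L) =
        s.piecewise (fun i => x • (s.piecewise (fun _ : Fin (2 * n) => β) (fun _ => L)) i)
          (s.piecewise (fun _ : Fin (2 * n) => β) (fun _ => L)) := by
      funext i
      by_cases h : i ∈ s <;> simp [Finset.piecewise, h]
    rw [h2, T.map_piecewise_smul]
    have h3 : s.piecewise (fun _ : Fin (2 * n) => β) (fun _ => L) =
        fun i => if i ∈ s then β else L := by
      funext i; simp [Finset.piecewise]
    rw [h3, hsym s]
    simp [Finset.prod_const, smul_eq_mul]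
  -- the two polynomials
  set p : Polynomial ℝ :=
    ∑ s : Finset (Fin (2 * n)), Polynomial.C (a s.card) * Polynomial.X ^ s.card with hp
  set Q : Polynomial ℝ := Polynomial.C c *
    (Polynomial.C (2 * q L β) * Polynomial.X + Polynomial.C (q β β) * Polynomial.X ^ 2) ^ n
    with hQ
  have hpQ : p = Q := by
    apply Polynomial.funext
    intro x
    have hqval : q (L + x • β) (L + x • β) = 2 * q L β * x + q β β * x ^ 2 := by
      simp only [map_add, map_smul, LinearMap.add_apply, LinearMap.smul_apply, smul_eq_mul]
      rw [hL, hq β L]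
      ring
    have h1 : Q.eval x = c * (q (L + x • β) (L + x • β)) ^ n := by
      simp only [hQ, Polynomial.eval_mul, Polynomial.eval_pow, Polynomial.eval_add,
        Polynomial.eval_C, Polynomial.eval_X]
      rw [hqval]
    have h2 : p.eval x = T (fun _ => L + x • β) := by
      rw [key x, hp, Polynomial.eval_finset_sum]
      refine Finset.sum_congr rfl fun s _ => ?_
      simp only [Polynomial.eval_mul, Polynomial.eval_pow, Polynomial.eval_C, Polynomial.eval_X]
      ring
    rw [h1, h2]
    exact hfujiki _
  -- coefficient of degree n - 1 vanishes for Q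
  have hQcoeff : Q.coeff (n - 1) = 0 := by
    have hstep : (Polynomial.C (2 * q L β) * Polynomial.X +
        Polynomial.C (q β β) * Polynomial.X ^ 2 : Polynomial ℝ) =
        Polynomial.X * (Polynomial.C (2 * q L β) + Polynomial.C (q β β) * Polynomial.X) := by
      ring
    have hfac : Q = (Polynomial.C c *
        (Polynomial.C (2 * q L β) + Polynomial.C (q β β) * Polynomial.X) ^ n) *
        Polynomial.X ^ n := by
      rw [hQ, hstep, mul_pow]
      ring
    rw [hfac, Polynomial.coeff_mul_X_pow']
    have : ¬ n ≤ n - 1 := by omega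
    simp [this]
  have hpcoeff : p.coeff (n - 1) =
      ((Finset.univ.filter (fun s : Finset (Fin (2 * n)) => s.card = n - 1)).card : ℝ)
        * a (n - 1) := by
    rw [hp, Polynomial.finset_sum_coeff]
    have h1 : ∀ s : Finset (Fin (2 * n)),
        (Polynomial.C (a s.card) * Polynomial.X ^ s.card).coeff (n - 1) =
        if s.card = n - 1 then a (n - 1) else 0 := by
      intro s
      rw [Polynomial.coeff_C_mul, Polynomial.coeff_X_pow]
      by_cases h : s.card = n - 1
      · simp [h]
      · rw [if_neg (fun hh => h hh.symm), mul_zero, if_neg h]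
    simp only [h1]
    rw [← Finset.sum_filter, Finset.sum_const, nsmul_eq_mul]
  -- conclude a (n-1) = 0
  have hcardpos : 0 <
      (Finset.univ.filter (fun s : Finset (Fin (2 * n)) => s.card = n - 1)).card := by
    obtain ⟨s0, -, hs0⟩ := Finset.exists_subset_card_eq
      (s := (Finset.univ : Finset (Fin (2 * n)))) (n := n - 1)
      (by simp only [Finset.card_univ, Fintype.card_fin]; omega)
    exact Finset.card_pos.mpr ⟨s0, by simp [hs0]⟩
  have han : a (n - 1) = 0 := by
    have h0 : ((Finset.univ.filter
        (fun s : Finset (Fin (2 * n)) => s.card = n - 1)).card : ℝ) * a (n - 1) = 0 := by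
      rw [← hpcoeff, hpQ, hQcoeff]
    have hc : ((Finset.univ.filter
        (fun s : Finset (Fin (2 * n)) => s.card = n - 1)).card : ℝ) ≠ 0 := by
      exact_mod_cast hcardpos.ne'
    exact (mul_eq_zero.mp h0).resolve_left hc
  -- identify the goal with a (n - 1)
  set s : Finset (Fin (2 * n)) := Finset.univ.filter (fun i => ¬ (i : ℕ) < n + 1) with hs
  have hgoal : (fun i : Fin (2 * n) => if (i : ℕ) < n + 1 then L else β) =
      fun i => if i ∈ s then β else L := by
    funext i
    by_cases h : (i : ℕ) < n + 1
    · rw [if_pos h, if_neg (by simp [hs]; omega)]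
    · rw [if_neg h, if_pos (by simp [hs]; omega)]
  have hscard : s.card = n - 1 := by
    have h1 : (Finset.univ.filter (fun i : Fin (2 * n) => (i : ℕ) < n + 1)).card = n + 1 :=
      hflt (n + 1) (by omega)
    have h2 : s.card = 2 * n - (n + 1) := by
      rw [hs, Finset.filter_not, Finset.card_sdiff_of_subset (Finset.filter_subset _ _), h1,
        Finset.card_univ, Fintype.card_fin]
    omega
  rw [hgoal, hsym s, hscard]
  exact han
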